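/- Let A be a Banach lattice algebra and let (p_λ)_{λ∈Λ} be a family of elements of A, each of which is both a left band projection and a right band projection, such that p_α p_β = 0 for α ≠ β and p_α p_α = p_α for all α. Then for every finite nonempty subset Φ ⊆ Λ × Λ and every x ∈ A with x ≥ 0, the supremum in A of the finite set {p_α x p_β : (α,β) ∈ Φ} equals the sum Σ_{(α,β)∈Φ} p_α x p_β. -/

import Mathlib

section Aux

variable {A : Type*} [Lattice A] [AddCommGroup A] [CovariantClass A A (· + ·) (· ≤ ·)]

/-- Band-projection style disjointness. -/
lemma aux_inf_eq_zero (P : A → A) (hPsub : ∀ u v : A, P (u - v) = P u - P v)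
    (hPpos : ∀ u : A, 0 ≤ u → 0 ≤ P u) (hPle : ∀ u : A, 0 ≤ u → P u ≤ u)
    {y y' : A} (hy : 0 ≤ y) (hy' : 0 ≤ y') (hPy : P y = y) (hPy' : P y' = 0) :
    y ⊓ y' = 0 := by
  set z := y ⊓ y' with hzdef
  have hz0 : 0 ≤ z := le_inf hy hy'
  have h1 : P z ≤ 0 := by
    have : 0 ≤ P (y' - z) := hPpos _ (sub_nonneg.2 inf_le_right)
    rw [hPsub, hPy'] at this
    simpa using this
  have h2 : z ≤ P z := by
    have : P (y - z) ≤ y - z := hPle _ (sub_nonneg.2 inf_le_left)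
    rw [hPsub, hPy] at this
    have := sub_le_sub_left this y
    simpa using this
  have h3 : z ≤ 0 := le_trans h2 h1
  exact le_antisymm h3 hz0

lemma aux_sup'_eq_sum {ι : Type*} (s : Finset ι) (hs : s.Nonempty) (f : ι → A)
    (h0 : ∀ i ∈ s, 0 ≤ f i)
    (hd : ∀ i ∈ s, ∀ j ∈ s, i ≠ j → f i ⊓ f j = 0) :
    s.sup' hs f = ∑ i ∈ s, f i := by
  letI := AddCommGroup.toDistribLattice A
  induction s using Finset.cons_induction with
  | empty => exact absurd hs (by simp)
  | cons a s ha ih =>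
    rcases s.eq_empty_or_nonempty with rfl | hsne
    · simp
    · have hsum := ih hsne (fun i hi => h0 i (Finset.mem_cons_of_mem hi))
        (fun i hi j hj hij => hd i (Finset.mem_cons_of_mem hi) j (Finset.mem_cons_of_mem hj) hij)
      rw [Finset.sup'_cons hsne, hsum, Finset.sum_cons]
      have hinf : f a ⊓ ∑ i ∈ s, f i = 0 := by
        rw [← hsum, Finset.sup'_inf_distrib_left hsne f (f a)]
        have : ∀ i ∈ s, f a ⊓ f i = 0 := fun i hi =>
          hd a (Finset.mem_cons_self a s) i (Finset.mem_cons_of_mem hi)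
            (by rintro rfl; exact ha hi)
        calc s.sup' hsne (fun i => f a ⊓ f i) = s.sup' hsne (fun _ => (0:A)) :=
              Finset.sup'_congr hsne rfl this
          _ = 0 := Finset.sup'_const hsne 0
      have := inf_add_sup (f a) (∑ i ∈ s, f i)
      rw [hinf, zero_add] at this
      rw [this]

end Aux


/-- If `(p_λ)` is a family of left-and-right band projections in a
Banach lattice algebra with `p_α p_β = δ_{αβ} p_α`, then for each finite nonempty
`Φ ⊆ Λ × Λ` and each `x ≥ 0`, the supremum of `{p_α x p_β : (α,β) ∈ Φ}` is the sum
`Σ_{(α,β)∈Φ} p_α x p_β`. -/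
theorem finite_sup_of_disjoint_band_projections_eq_sum
    {A : Type*} [NormedAddCommGroup A] [Lattice A] [IsOrderedAddMonoid A] [HasSolidNorm A]
    [NormedSpace ℝ A]
    [PosSMulStrictMono ℝ A] [PosSMulReflectLT ℝ A] [CompleteSpace A]
    (mul : A →ₗ[ℝ] A →ₗ[ℝ] A)
    (mul_assoc : ∀ a b c : A, mul (mul a b) c = mul a (mul b c))
    (norm_mul_le : ∀ a b : A, ‖mul a b‖ ≤ ‖a‖ * ‖b‖)
    (mul_nonneg : ∀ a b : A, 0 ≤ a → 0 ≤ b → 0 ≤ mul a b)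
    {Λ : Type*} (p : Λ → A)
    (hpos : ∀ l, 0 ≤ p l)
    (hL : ∀ l, ∀ x : A, 0 ≤ x → mul (p l) x ≤ x ∧ mul (mul (p l) (p l)) x = mul (p l) x)
    (hR : ∀ l, ∀ x : A, 0 ≤ x → mul x (p l) ≤ x ∧ mul x (mul (p l) (p l)) = mul x (p l))
    (horth : ∀ a b : Λ, a ≠ b → mul (p a) (p b) = 0)
    (hidem : ∀ a : Λ, mul (p a) (p a) = p a)
    (Φ : Finset (Λ × Λ)) (hΦ : Φ.Nonempty)
    (x : A) (hx : 0 ≤ x) :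
    Φ.sup' hΦ (fun q => mul (p q.1) (mul x (p q.2))) =
      ∑ q ∈ Φ, mul (p q.1) (mul x (p q.2)) := by
  set f : Λ × Λ → A := fun q => mul (p q.1) (mul x (p q.2)) with hf
  have h0 : ∀ q : Λ × Λ, 0 ≤ f q := fun q =>
    mul_nonneg _ _ (hpos q.1) (mul_nonneg _ _ hx (hpos q.2))
  -- each f q is fixed by left mult by p q.1 and right mult by p q.2
  have hfix_left : ∀ q : Λ × Λ, mul (p q.1) (f q) = f q := by
    intro q
    have h := (hL q.1 (mul x (p q.2)) (mul_nonneg _ _ hx (hpos q.2))).2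
    rw [mul_assoc] at h
    exact h
  have hfix_right : ∀ q : Λ × Λ, mul (f q) (p q.2) = f q := by
    intro q
    show mul (mul (p q.1) (mul x (p q.2))) (p q.2) = _
    rw [mul_assoc, mul_assoc, hidem q.2]
  -- left annihilation / right annihilation
  have hkill_left : ∀ l : Λ, ∀ q : Λ × Λ, l ≠ q.1 → mul (p l) (f q) = 0 := by
    intro l q hne
    show mul (p l) (mul (p q.1) (mul x (p q.2))) = 0
    rw [← mul_assoc, horth l q.1 hne]
    simp
  have hkill_right : ∀ l : Λ, ∀ q : Λ × Λ, l ≠ q.2 → mul (f q) (p l) = 0 := by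
    intro l q hne
    show mul (mul (p q.1) (mul x (p q.2))) (p l) = 0
    rw [mul_assoc, mul_assoc, horth q.2 l (Ne.symm hne)]
    simp
  -- pairwise disjointness
  have hd : ∀ q ∈ Φ, ∀ r ∈ Φ, q ≠ r → f q ⊓ f r = 0 := by
    intro q _ r _ hqr
    by_cases h1 : q.1 = r.1
    · have h2 : q.2 ≠ r.2 := by
        intro h2
        exact hqr (Prod.ext h1 h2)
      refine aux_inf_eq_zero (fun u => mul u (p q.2)) ?_ ?_ ?_ (h0 q) (h0 r)
          (hfix_right q) (hkill_right q.2 r ?_)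
      · intro u v; simp only [map_sub, LinearMap.sub_apply]
      · intro u hu; exact mul_nonneg _ _ hu (hpos q.2)
      · intro u hu; exact (hR q.2 u hu).1
      · exact fun h => h2 h
    · refine aux_inf_eq_zero (fun u => mul (p q.1) u) ?_ ?_ ?_ (h0 q) (h0 r)
          (hfix_left q) (hkill_left q.1 r h1)
      · intro u v; simp only [map_sub]
      · intro u hu; exact mul_nonneg _ _ (hpos q.1) hu
      · intro u hu; exact (hL q.1 u hu).1
  exact aux_sup'_eq_sum Φ hΦ f (fun q _ => h0 q) hd
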